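/- In the modified AKV model: (iii) every vector w ∈ W_D that is orthogonal to e_0 belongs to V; (iv) V ∩ W_D^⊥ is the orthogonal direct sum of Im|Z| ∩ {ψ, Z*ψ'}^⊥ and ran P_3 ∩ {ψ', Zψ}^⊥, i.e., V ∩ W_D^⊥ = (Im|Z| ∩ {ψ, Z*ψ'}^⊥) ⊕ (ran P_3 ∩ {ψ', Zψ}^⊥). -/

import Mathlib

noncomputable section

open ContinuousLinearMap Finset
open scoped InnerProductSpace

/-- The Hilbert space ℂ^(N+M+1) of the modified AKV model. -/
abbrev AKVSpace (N M : ℕ) := EuclideanSpace ℂ (Fin (N + M + 1))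

namespace AKV

variable (N M : ℕ)

/-- standard basis vector -/
def ket (i : Fin (N + M + 1)) : AKVSpace N M := EuclideanSpace.single i 1

/-- rank-one operator |u⟩⟨v| : x ↦ ⟪v, x⟫ • u -/
def ketbra (u v : AKVSpace N M) : AKVSpace N M →L[ℂ] AKVSpace N M :=
  (innerSL ℂ v).smulRight u

/-- indices 2,…,N of the second level -/
def idx2 : Finset (Fin (N + M + 1)) := univ.filter fun i => 2 ≤ (i : ℕ) ∧ (i : ℕ) ≤ N
/-- indices N+1,…,N+M of the third level -/
def idx3 : Finset (Fin (N + M + 1)) := univ.filter fun i => N + 1 ≤ (i : ℕ)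

/-- orthogonal projection onto span{e_0} -/
def P0 : AKVSpace N M →L[ℂ] AKVSpace N M := ketbra N M (ket N M 0) (ket N M 0)
/-- orthogonal projection onto span{e_1} -/
def P1 : AKVSpace N M →L[ℂ] AKVSpace N M := ketbra N M (ket N M 1) (ket N M 1)
/-- orthogonal projection onto span{e_2,…,e_N} -/
def P2 : AKVSpace N M →L[ℂ] AKVSpace N M := ∑ i ∈ idx2 N M, ketbra N M (ket N M i) (ket N M i)
/-- orthogonal projection onto span{e_{N+1},…,e_{N+M}} -/
def P3 : AKVSpace N M →L[ℂ] AKVSpace N M := ∑ i ∈ idx3 N M, ketbra N M (ket N M i) (ket N M i)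

/-- ψ = e_2 + ⋯ + e_N -/
def psi : AKVSpace N M := ∑ i ∈ idx2 N M, ket N M i
/-- ψ' = e_{N+1} + ⋯ + e_{N+M} -/
def psi' : AKVSpace N M := ∑ i ∈ idx3 N M, ket N M i

/-- |Z| = Z⋆Z -/
def absZ (Z : AKVSpace N M →L[ℂ] AKVSpace N M) : AKVSpace N M →L[ℂ] AKVSpace N M :=
  adjoint Z * Z

/-- hypotheses on the interference operator Z of the modified AKV model -/
def IsAKVZ (hM : 1 ≤ M) (Z : AKVSpace N M →L[ℂ] AKVSpace N M) : Prop :=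
  Z = P3 N M * Z * P2 N M ∧
  Z * adjoint Z = P3 N M ∧
  Z (ket N M ⟨N - 1, by omega⟩) = ((Real.sqrt ((N : ℝ) - 1))⁻¹ : ℂ) • psi' N M ∧
  adjoint Z (ket N M ⟨N + 1, by omega⟩) = ((Real.sqrt ((N : ℝ) - 1))⁻¹ : ℂ) • psi N M

/-- the five Kraus operators -/
def kraus (Γ1m Γ1p Γ2m Γ2p Γ3m : ℝ) (Z : AKVSpace N M →L[ℂ] AKVSpace N M) :
    Fin 5 → AKVSpace N M →L[ℂ] AKVSpace N M :=
  ![((Real.sqrt (2 * Γ1m) : ℝ) : ℂ) • ketbra N M (psi N M) (ket N M 1),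
    ((Real.sqrt (2 * ((N : ℝ) - 1) * Γ2m) : ℝ) : ℂ) • Z,
    ((Real.sqrt (2 * Γ3m) : ℝ) : ℂ) • ketbra N M (ket N M 0) (psi' N M),
    ((Real.sqrt (2 * Γ1p) : ℝ) : ℂ) • ketbra N M (ket N M 1) (psi N M),
    ((Real.sqrt (2 * ((N : ℝ) - 1) * Γ2p) : ℝ) : ℂ) • adjoint Z]

/-- the effective Hamiltonian -/
def Heff (γ1m γ1p γ2m γ2p γ3m : ℝ) (Z : AKVSpace N M →L[ℂ] AKVSpace N M) :
    AKVSpace N M →L[ℂ] AKVSpace N M :=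
  (γ1p : ℂ) • ketbra N M (psi N M) (psi N M)
    - (((N : ℂ) - 1) * (γ1m : ℂ)) • ketbra N M (ket N M 1) (ket N M 1)
    + (((N : ℂ) - 1) * (γ2p : ℂ)) • P3 N M
    - (((N : ℂ) - 1) * (γ2m : ℂ)) • absZ N M Z
    - (γ3m : ℂ) • ketbra N M (psi' N M) (psi' N M)

/-- the predual GKSL generator ℒ_* of the modified AKV model -/
def Lstar (Γ1m Γ1p Γ2m Γ2p Γ3m γ1m γ1p γ2m γ2p γ3m : ℝ)
    (Z ρ : AKVSpace N M →L[ℂ] AKVSpace N M) : AKVSpace N M →L[ℂ] AKVSpace N M :=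
  -Complex.I • (Heff N M γ1m γ1p γ2m γ2p γ3m Z * ρ - ρ * Heff N M γ1m γ1p γ2m γ2p γ3m Z)
    + ∑ k : Fin 5,
        (kraus N M Γ1m Γ1p Γ2m Γ2p Γ3m Z k * ρ * adjoint (kraus N M Γ1m Γ1p Γ2m Γ2p Γ3m Z k)
          - (1 / 2 : ℂ) • (adjoint (kraus N M Γ1m Γ1p Γ2m Γ2p Γ3m Z k) *
                kraus N M Γ1m Γ1p Γ2m Γ2p Γ3m Z k * ρ
              + ρ * (adjoint (kraus N M Γ1m Γ1p Γ2m Γ2p Γ3m Z k) *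
                kraus N M Γ1m Γ1p Γ2m Γ2p Γ3m Z k)))

/-- a state: positive semidefinite with trace one -/
def IsState (ρ : AKVSpace N M →L[ℂ] AKVSpace N M) : Prop :=
  ρ.IsPositive ∧ LinearMap.trace ℂ (AKVSpace N M) ↑ρ = 1

/-- the interaction-free subspace W_D -/
def WD (Z : AKVSpace N M →L[ℂ] AKVSpace N M) : Submodule ℂ (AKVSpace N M) :=
  (Submodule.span ℂ {ket N M 1, psi N M, psi' N M})ᗮ ⊓
    LinearMap.ker (Z : AKVSpace N M →ₗ[ℂ] AKVSpace N M) ⊓ LinearMap.ker ((adjoint Z : AKVSpace N M →L[ℂ] AKVSpace N M) : AKVSpace N M →ₗ[ℂ] AKVSpace N M)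

/-- the subspace V = {e_0, e_1, ψ, ψ', Zψ, Z⋆ψ'}^⊥ -/
def Vsub (Z : AKVSpace N M →L[ℂ] AKVSpace N M) : Submodule ℂ (AKVSpace N M) :=
  (Submodule.span ℂ
    {ket N M 0, ket N M 1, psi N M, psi' N M, Z (psi N M), adjoint Z (psi' N M)})ᗮ

/-- Im|Z| ∩ {ψ, Z⋆ψ'}^⊥ -/
def subA (Z : AKVSpace N M →L[ℂ] AKVSpace N M) : Submodule ℂ (AKVSpace N M) :=
  LinearMap.range ((absZ N M Z : AKVSpace N M →L[ℂ] AKVSpace N M) : AKVSpace N M →ₗ[ℂ] AKVSpace N M) ⊓ (Submodule.span ℂ {psi N M, adjoint Z (psi' N M)})ᗮ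

/-- ran P₃ ∩ {ψ', Zψ}^⊥ -/
def subB (Z : AKVSpace N M →L[ℂ] AKVSpace N M) : Submodule ℂ (AKVSpace N M) :=
  LinearMap.range ((P3 N M : AKVSpace N M →L[ℂ] AKVSpace N M) : AKVSpace N M →ₗ[ℂ] AKVSpace N M) ⊓ (Submodule.span ℂ {psi' N M, Z (psi N M)})ᗮ

/-- the orthogonal projection onto a subspace, as an operator on the whole space -/
def projOp (U : Submodule ℂ (AKVSpace N M)) : AKVSpace N M →L[ℂ] AKVSpace N M :=
  U.subtypeL ∘L U.orthogonalProjectionOnto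


variable {N M}

lemma ketbra_apply (u v x : AKVSpace N M) : ketbra N M u v x = ⟪v, x⟫_ℂ • u := rfl

lemma inner_ket_ket (i j : Fin (N + M + 1)) :
    ⟪ket N M i, ket N M j⟫_ℂ = if i = j then 1 else 0 := by
  by_cases h : i = j <;>
    simp [ket, h, EuclideanSpace.inner_single_left, EuclideanSpace.single_apply, eq_comm]

lemma adjoint_ketbra (u v : AKVSpace N M) :
    adjoint (ketbra N M u v) = ketbra N M v u := by
  rw [eq_comm, ContinuousLinearMap.eq_adjoint_iff]
  intro x y
  simp only [ketbra_apply, inner_smul_left, inner_smul_right, inner_conj_symm]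
  ring

lemma ketbra_comp (u v u' v' : AKVSpace N M) :
    ketbra N M u v * ketbra N M u' v' = ⟪v, u'⟫_ℂ • ketbra N M u v' := by
  ext x
  simp only [ketbra_apply, ContinuousLinearMap.mul_apply, inner_smul_right,
    ContinuousLinearMap.smul_apply, smul_smul]
  ring_nf

-- generic sum of |e_i><e_i| applied to e_j
lemma sumproj_ket (s : Finset (Fin (N + M + 1))) (j : Fin (N + M + 1)) :
    (∑ i ∈ s, ketbra N M (ket N M i) (ket N M i)) (ket N M j)
      = if j ∈ s then ket N M j else 0 := by
  rw [ContinuousLinearMap.sum_apply]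
  have : ∀ i ∈ s, ketbra N M (ket N M i) (ket N M i) (ket N M j)
      = if i = j then ket N M i else 0 := by
    intro i _
    rw [ketbra_apply, inner_ket_ket]
    by_cases h : i = j <;> simp [h]
  rw [Finset.sum_congr rfl this, Finset.sum_ite_eq' s j (fun i => ket N M i)]

lemma expand (x : AKVSpace N M) :
    ∑ i : Fin (N + M + 1), ⟪ket N M i, x⟫_ℂ • ket N M i = x := by
  have h := (EuclideanSpace.basisFun (Fin (N + M + 1)) ℂ).sum_repr' x
  simpa [ket, EuclideanSpace.basisFun_apply] using h


lemma mem_idx2 {i : Fin (N + M + 1)} : i ∈ idx2 N M ↔ 2 ≤ (i : ℕ) ∧ (i : ℕ) ≤ N := by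
  simp [idx2]

lemma mem_idx3 {i : Fin (N + M + 1)} : i ∈ idx3 N M ↔ N + 1 ≤ (i : ℕ) := by
  simp [idx3]

lemma P2_ket (j : Fin (N + M + 1)) :
    P2 N M (ket N M j) = if j ∈ idx2 N M then ket N M j else 0 := sumproj_ket _ _

lemma P3_ket (j : Fin (N + M + 1)) :
    P3 N M (ket N M j) = if j ∈ idx3 N M then ket N M j else 0 := sumproj_ket _ _

lemma adjoint_P2 : adjoint (P2 N M) = P2 N M := by
  rw [P2, map_sum]
  exact Finset.sum_congr rfl fun i _ => adjoint_ketbra _ _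

lemma adjoint_P3 : adjoint (P3 N M) = P3 N M := by
  rw [P3, map_sum]
  exact Finset.sum_congr rfl fun i _ => adjoint_ketbra _ _

lemma sumproj_mul (s t : Finset (Fin (N + M + 1))) :
    (∑ i ∈ s, ketbra N M (ket N M i) (ket N M i)) *
      (∑ i ∈ t, ketbra N M (ket N M i) (ket N M i))
      = ∑ i ∈ s ∩ t, ketbra N M (ket N M i) (ket N M i) := by
  rw [Finset.sum_mul_sum]
  have h1 : ∀ i ∈ s, ∀ j ∈ t, ketbra N M (ket N M i) (ket N M i) * ketbra N M (ket N M j) (ket N M j)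
      = if j = i then ketbra N M (ket N M i) (ket N M j) else 0 := by
    intro i _ j _
    rw [ketbra_comp, inner_ket_ket]
    by_cases h : i = j
    · simp [h]
    · rw [if_neg h, if_neg (fun hh => h hh.symm)]
      exact zero_smul ℂ (ketbra N M (ket N M i) (ket N M j))
  calc (∑ i ∈ s, ∑ j ∈ t, ketbra N M (ket N M i) (ket N M i) * ketbra N M (ket N M j) (ket N M j))
      = ∑ i ∈ s, ∑ j ∈ t, if j = i then ketbra N M (ket N M i) (ket N M j) else 0 :=
        Finset.sum_congr rfl fun i hi => Finset.sum_congr rfl fun j hj => h1 i hi j hj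
    _ = ∑ i ∈ s, if i ∈ t then ketbra N M (ket N M i) (ket N M i) else 0 :=
        Finset.sum_congr rfl fun i _ => Finset.sum_ite_eq' t i _
    _ = ∑ i ∈ s ∩ t, ketbra N M (ket N M i) (ket N M i) := by
        rw [Finset.sum_ite_mem]

lemma idx2_inter_idx3 : idx2 N M ∩ idx3 N M = ∅ := by
  ext i
  simp only [Finset.mem_inter, mem_idx2, mem_idx3, Finset.notMem_empty, iff_false]
  omega

lemma P2_mul_P3 : P2 N M * P3 N M = 0 := by
  rw [P2, P3, sumproj_mul, idx2_inter_idx3, Finset.sum_empty]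

lemma P3_mul_P2 : P3 N M * P2 N M = 0 := by
  rw [P2, P3, sumproj_mul, Finset.inter_comm, idx2_inter_idx3, Finset.sum_empty]

lemma P2_mul_P2 : P2 N M * P2 N M = P2 N M := by
  rw [P2, sumproj_mul, Finset.inter_self]

lemma P3_mul_P3 : P3 N M * P3 N M = P3 N M := by
  rw [P3, sumproj_mul, Finset.inter_self]

lemma P2_psi : P2 N M (psi N M) = psi N M := by
  rw [psi, map_sum]
  exact Finset.sum_congr rfl fun i hi => by rw [P2_ket, if_pos hi]

lemma P3_psi' : P3 N M (psi' N M) = psi' N M := by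
  rw [psi', map_sum]
  exact Finset.sum_congr rfl fun i hi => by rw [P3_ket, if_pos hi]

lemma P3_psi : P3 N M (psi N M) = 0 := by
  rw [psi, map_sum]
  refine Finset.sum_eq_zero fun i hi => ?_
  rw [P3_ket, if_neg]
  rw [mem_idx2] at hi
  rw [mem_idx3]
  omega

lemma P2_psi' : P2 N M (psi' N M) = 0 := by
  rw [psi', map_sum]
  refine Finset.sum_eq_zero fun i hi => ?_
  rw [P2_ket, if_neg]
  rw [mem_idx3] at hi
  rw [mem_idx2]
  omega

lemma val_ket0 : ((0 : Fin (N + M + 1)) : ℕ) = 0 := rfl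

lemma val_ket1 (hN : 3 ≤ N) : ((1 : Fin (N + M + 1)) : ℕ) = 1 := by
  rw [Fin.val_one']
  exact Nat.mod_eq_of_lt (by omega)

lemma P2_ket0 : P2 N M (ket N M 0) = 0 := by
  rw [P2_ket, if_neg]
  rw [mem_idx2, val_ket0]
  omega

lemma P3_ket0 : P3 N M (ket N M 0) = 0 := by
  rw [P3_ket, if_neg]
  rw [mem_idx3, val_ket0]
  omega

lemma P2_ket1 (hN : 3 ≤ N) : P2 N M (ket N M 1) = 0 := by
  rw [P2_ket, if_neg]
  rw [mem_idx2, val_ket1 hN]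
  omega

lemma P3_ket1 (hN : 3 ≤ N) : P3 N M (ket N M 1) = 0 := by
  rw [P3_ket, if_neg]
  rw [mem_idx3, val_ket1 hN]
  omega

lemma P3_ketN1 (hN : 3 ≤ N) (hM : 1 ≤ M) :
    P3 N M (ket N M ⟨N + 1, by omega⟩) = ket N M ⟨N + 1, by omega⟩ := by
  rw [P3_ket, if_pos]
  rw [mem_idx3]

-- inner product helpers with selfadjoint projections
lemma inner_P2_right (u x : AKVSpace N M) : ⟪u, P2 N M x⟫_ℂ = ⟪P2 N M u, x⟫_ℂ := by
  rw [← ContinuousLinearMap.adjoint_inner_left, adjoint_P2]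

lemma inner_P3_right (u x : AKVSpace N M) : ⟪u, P3 N M x⟫_ℂ = ⟪P3 N M u, x⟫_ℂ := by
  rw [← ContinuousLinearMap.adjoint_inner_left, adjoint_P3]

section Zlem

variable {Z : AKVSpace N M →L[ℂ] AKVSpace N M}

lemma adjoint_mul (A B : AKVSpace N M →L[ℂ] AKVSpace N M) :
    adjoint (A * B) = adjoint B * adjoint A := by
  rw [← ContinuousLinearMap.star_eq_adjoint, ← ContinuousLinearMap.star_eq_adjoint,
    ← ContinuousLinearMap.star_eq_adjoint, star_mul]

lemma P3_mul_Z (h : Z = P3 N M * Z * P2 N M) : P3 N M * Z = Z := by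
  nth_rewrite 1 [h]
  rw [← mul_assoc, ← mul_assoc, P3_mul_P3, ← h]

lemma Z_mul_P2 (h : Z = P3 N M * Z * P2 N M) : Z * P2 N M = Z := by
  nth_rewrite 1 [h]
  rw [mul_assoc, P2_mul_P2, ← h]

lemma adjZ_mul_P3 (h : Z = P3 N M * Z * P2 N M) : adjoint Z * P3 N M = adjoint Z := by
  have h2 := congrArg adjoint (P3_mul_Z h)
  rwa [adjoint_mul, adjoint_P3] at h2

lemma P2_mul_adjZ (h : Z = P3 N M * Z * P2 N M) : P2 N M * adjoint Z = adjoint Z := by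
  have h2 := congrArg adjoint (Z_mul_P2 h)
  rwa [adjoint_mul, adjoint_P2] at h2

lemma P2_mul_Z (h : Z = P3 N M * Z * P2 N M) : P2 N M * Z = 0 := by
  rw [← P3_mul_Z h, ← mul_assoc, P2_mul_P3, zero_mul]

lemma P3_mul_adjZ (h : Z = P3 N M * Z * P2 N M) : P3 N M * adjoint Z = 0 := by
  rw [← P2_mul_adjZ h, ← mul_assoc, P3_mul_P2, zero_mul]

lemma P2_mul_absZ (h : Z = P3 N M * Z * P2 N M) : P2 N M * absZ N M Z = absZ N M Z := by
  rw [absZ, ← mul_assoc, P2_mul_adjZ h]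

lemma P3_mul_absZ (h : Z = P3 N M * Z * P2 N M) : P3 N M * absZ N M Z = 0 := by
  rw [absZ, ← mul_assoc, P3_mul_adjZ h, zero_mul]

lemma absZ_mul_adjZ (h : Z = P3 N M * Z * P2 N M) (h2 : Z * adjoint Z = P3 N M) :
    absZ N M Z * adjoint Z = adjoint Z := by
  rw [absZ, mul_assoc, h2, adjZ_mul_P3 h]

lemma absZ_idem (h : Z = P3 N M * Z * P2 N M) (h2 : Z * adjoint Z = P3 N M) :
    absZ N M Z * absZ N M Z = absZ N M Z := by
  rw [absZ, mul_assoc, ← mul_assoc Z (adjoint Z) Z, h2, P3_mul_Z h]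

end Zlem


lemma mem_span_orthogonal_iff {S : Set (AKVSpace N M)} {x : AKVSpace N M} :
    x ∈ (Submodule.span ℂ S)ᗮ ↔ ∀ s ∈ S, ⟪s, x⟫_ℂ = 0 := by
  rw [Submodule.mem_orthogonal]
  constructor
  · exact fun h s hs => h s (Submodule.subset_span hs)
  · intro h u hu
    induction hu using Submodule.span_induction with
    | mem y hy => exact h y hy
    | zero => simp
    | add a b _ _ ha hb => rw [inner_add_left, ha, hb, add_zero]
    | smul c a _ ha => rw [inner_smul_left, ha, mul_zero]

lemma comp_apply_eq {A B C : AKVSpace N M →L[ℂ] AKVSpace N M} (h : A * B = C)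
    (x : AKVSpace N M) : A (B x) = C x := by
  rw [← ContinuousLinearMap.mul_apply, h]

lemma ker_eq_orth (A : AKVSpace N M →L[ℂ] AKVSpace N M) :
    LinearMap.ker (A : AKVSpace N M →ₗ[ℂ] AKVSpace N M) = (LinearMap.range ((adjoint A : AKVSpace N M →L[ℂ] AKVSpace N M) : AKVSpace N M →ₗ[ℂ] AKVSpace N M))ᗮ := by
  ext x
  rw [LinearMap.mem_ker, ContinuousLinearMap.coe_coe, Submodule.mem_orthogonal]
  constructor
  · rintro h u ⟨v, rfl⟩
    show ⟪adjoint A v, x⟫_ℂ = 0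
    rw [ContinuousLinearMap.adjoint_inner_left, h, inner_zero_right]
  · intro h
    have h2 := h (adjoint A (A x)) ⟨A x, rfl⟩
    rw [ContinuousLinearMap.adjoint_inner_left] at h2
    exact inner_self_eq_zero.mp h2

section Zlem2

variable {Z : AKVSpace N M →L[ℂ] AKVSpace N M}

lemma absZ_psi (hN : 3 ≤ N) (hi : N + 1 < N + M + 1)
    (h1 : Z = P3 N M * Z * P2 N M) (h2 : Z * adjoint Z = P3 N M)
    (h4 : adjoint Z (ket N M ⟨N + 1, hi⟩) = ((Real.sqrt ((N : ℝ) - 1))⁻¹ : ℂ) • psi N M) :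
    absZ N M Z (psi N M) = psi N M := by
  set c : ℂ := ((Real.sqrt ((N : ℝ) - 1))⁻¹ : ℂ) with hc
  have hcne : c ≠ 0 := by
    rw [hc]
    refine inv_ne_zero (Complex.ofReal_ne_zero.mpr (ne_of_gt (Real.sqrt_pos.mpr ?_)))
    have : (3 : ℝ) ≤ (N : ℝ) := by exact_mod_cast hN
    linarith
  have key : absZ N M Z (adjoint Z (ket N M ⟨N + 1, hi⟩))
      = adjoint Z (ket N M ⟨N + 1, hi⟩) :=
    comp_apply_eq (absZ_mul_adjZ h1 h2) _
  rw [h4, map_smul] at key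
  exact smul_right_injective (AKVSpace N M) hcne key

lemma WD_orth : (WD N M Z)ᗮ
    = Submodule.span ℂ {ket N M 1, psi N M, psi' N M}
      ⊔ LinearMap.range ((adjoint Z : AKVSpace N M →L[ℂ] AKVSpace N M) : AKVSpace N M →ₗ[ℂ] AKVSpace N M) ⊔ LinearMap.range (Z : AKVSpace N M →ₗ[ℂ] AKVSpace N M) := by
  rw [WD, ker_eq_orth Z, ker_eq_orth (adjoint Z), ContinuousLinearMap.adjoint_adjoint,
    Submodule.inf_orthogonal, Submodule.inf_orthogonal, Submodule.orthogonal_orthogonal]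

end Zlem2

lemma decomp (hN : 3 ≤ N) (x : AKVSpace N M)
    (h0 : ⟪ket N M 0, x⟫_ℂ = 0) (h1 : ⟪ket N M 1, x⟫_ℂ = 0) :
    P2 N M x + P3 N M x = x := by
  have hP2 : P2 N M x = ∑ i ∈ idx2 N M, ⟪ket N M i, x⟫_ℂ • ket N M i := by
    rw [P2, ContinuousLinearMap.sum_apply]; rfl
  have hP3 : P3 N M x = ∑ i ∈ idx3 N M, ⟪ket N M i, x⟫_ℂ • ket N M i := by
    rw [P3, ContinuousLinearMap.sum_apply]; rfl
  have hdisj : Disjoint (idx2 N M) (idx3 N M) :=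
    Finset.disjoint_iff_inter_eq_empty.mpr idx2_inter_idx3
  rw [hP2, hP3, ← Finset.sum_union hdisj]
  have hsub : idx2 N M ∪ idx3 N M ⊆ univ := Finset.subset_univ _
  have hzero : ∀ i ∈ univ, i ∉ idx2 N M ∪ idx3 N M → ⟪ket N M i, x⟫_ℂ • ket N M i = 0 := by
    intro i _ hi
    simp only [Finset.mem_union, mem_idx2, mem_idx3, not_or, not_and_or, not_le] at hi
    have hval : (i : ℕ) = 0 ∨ (i : ℕ) = 1 := by omega
    rcases hval with hv | hv
    · have : i = (0 : Fin (N + M + 1)) := Fin.ext (by rw [hv, val_ket0])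
      rw [this, h0, zero_smul]
    · have : i = (1 : Fin (N + M + 1)) := Fin.ext (by rw [hv, val_ket1 hN])
      rw [this, h1, zero_smul]
  rw [Finset.sum_subset hsub hzero]
  exact expand x


/-- In the modified AKV model: (iii) every `w ∈ W_D` orthogonal to `e₀` lies in `V`; (iv)
`V ∩ W_D^⊥` is the orthogonal direct sum of `Im|Z| ∩ {ψ, Z⋆ψ'}^⊥` and
`ran P₃ ∩ {ψ', Zψ}^⊥`. -/
theorem V_inter_WDperp_decomposition
    (N M : ℕ) (hN : 3 ≤ N) (hM1 : 1 ≤ M) (hM2 : M ≤ N - 1)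
    (Z : AKVSpace N M →L[ℂ] AKVSpace N M) (hZ : IsAKVZ N M hM1 Z) :
    (∀ w ∈ WD N M Z, ⟪ket N M 0, w⟫_ℂ = 0 → w ∈ Vsub N M Z) ∧
    Vsub N M Z ⊓ (WD N M Z)ᗮ = subA N M Z ⊔ subB N M Z ∧
    (∀ x ∈ subA N M Z, ∀ y ∈ subB N M Z, ⟪x, y⟫_ℂ = 0) := by
  obtain ⟨h1, h2, h3, h4⟩ := hZ
  refine ⟨?_, ?_, ?_⟩
  · -- (iii)
    intro w hw hw0
    rw [WD, Submodule.mem_inf, Submodule.mem_inf] at hw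
    obtain ⟨⟨hwK, hwZ⟩, hwZ'⟩ := hw
    rw [LinearMap.mem_ker, ContinuousLinearMap.coe_coe] at hwZ hwZ'
    have hK := mem_span_orthogonal_iff.mp hwK
    rw [Vsub, mem_span_orthogonal_iff]
    intro s hs
    simp only [Set.mem_insert_iff, Set.mem_singleton_iff] at hs
    rcases hs with rfl | rfl | rfl | rfl | rfl | rfl
    · exact hw0
    · exact hK _ (by simp)
    · exact hK _ (by simp)
    · exact hK _ (by simp)
    · have hh := ContinuousLinearMap.adjoint_inner_left (adjoint Z) w (psi N M)
      rw [ContinuousLinearMap.adjoint_adjoint] at hh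
      rw [hh, hwZ', inner_zero_right]
    · rw [ContinuousLinearMap.adjoint_inner_left, hwZ, inner_zero_right]
  · -- (iv) equality
    apply le_antisymm
    · intro x hx
      rw [Submodule.mem_inf] at hx
      obtain ⟨hxV, hxW⟩ := hx
      rw [Vsub] at hxV
      have hV := mem_span_orthogonal_iff.mp hxV
      have h0 : ⟪ket N M 0, x⟫_ℂ = 0 := hV _ (by simp)
      have h1' : ⟪ket N M 1, x⟫_ℂ = 0 := hV _ (by simp)
      have hps : ⟪psi N M, x⟫_ℂ = 0 := hV _ (by simp)
      have hps' : ⟪psi' N M, x⟫_ℂ = 0 := hV _ (by simp)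
      have hZps : ⟪Z (psi N M), x⟫_ℂ = 0 := hV _ (by simp)
      have hZps' : ⟪adjoint Z (psi' N M), x⟫_ℂ = 0 := hV _ (by simp)
      have hdec := decomp hN x h0 h1'
      rw [Submodule.mem_sup]
      refine ⟨P2 N M x, ?_, P3 N M x, ?_, hdec⟩
      · rw [subA, Submodule.mem_inf]
        constructor
        · -- P2 x ∈ range absZ
          rw [WD_orth] at hxW
          have hle : Submodule.span ℂ {ket N M 1, psi N M, psi' N M}
              ⊔ LinearMap.range ((adjoint Z : AKVSpace N M →L[ℂ] AKVSpace N M) : AKVSpace N M →ₗ[ℂ] AKVSpace N M) ⊔ LinearMap.range (Z : AKVSpace N M →ₗ[ℂ] AKVSpace N M)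
              ≤ Submodule.comap (P2 N M : AKVSpace N M →ₗ[ℂ] AKVSpace N M)
                  (LinearMap.range ((absZ N M Z : AKVSpace N M →L[ℂ] AKVSpace N M) : AKVSpace N M →ₗ[ℂ] AKVSpace N M)) := by
            refine sup_le (sup_le ?_ ?_) ?_
            · rw [Submodule.span_le]
              rintro s hs
              simp only [Set.mem_insert_iff, Set.mem_singleton_iff] at hs
              simp only [SetLike.mem_coe, Submodule.mem_comap, ContinuousLinearMap.coe_coe]
              rcases hs with rfl | rfl | rfl
              · rw [P2_ket1 hN]; exact zero_mem _
              · rw [P2_psi]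
                exact ⟨psi N M, absZ_psi hN (by omega) h1 h2 h4⟩
              · rw [P2_psi']; exact zero_mem _
            · rintro _ ⟨u, rfl⟩
              rw [Submodule.mem_comap]
              refine ⟨adjoint Z u, ?_⟩
              show absZ N M Z (adjoint Z u) = P2 N M (adjoint Z u)
              rw [comp_apply_eq (absZ_mul_adjZ h1 h2), comp_apply_eq (P2_mul_adjZ h1)]
            · rintro _ ⟨u, rfl⟩
              rw [Submodule.mem_comap]
              show P2 N M (Z u) ∈ LinearMap.range ((absZ N M Z : AKVSpace N M →L[ℂ] AKVSpace N M) : AKVSpace N M →ₗ[ℂ] AKVSpace N M)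
              rw [comp_apply_eq (P2_mul_Z h1), ContinuousLinearMap.zero_apply]
              exact zero_mem _
          exact Submodule.mem_comap.mp (hle hxW)
        · rw [mem_span_orthogonal_iff]
          intro s hs
          simp only [Set.mem_insert_iff, Set.mem_singleton_iff] at hs
          rcases hs with rfl | rfl
          · rw [inner_P2_right, P2_psi]; exact hps
          · rw [inner_P2_right, comp_apply_eq (P2_mul_adjZ h1)]; exact hZps'
      · rw [subB, Submodule.mem_inf]
        refine ⟨⟨x, rfl⟩, ?_⟩
        rw [mem_span_orthogonal_iff]
        intro s hs
        simp only [Set.mem_insert_iff, Set.mem_singleton_iff] at hs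
        rcases hs with rfl | rfl
        · rw [inner_P3_right, P3_psi']; exact hps'
        · rw [inner_P3_right, comp_apply_eq (P3_mul_Z h1)]; exact hZps
    · refine sup_le ?_ ?_
      · -- subA ≤ Vsub ⊓ WDᗮ
        intro x hx
        rw [subA, Submodule.mem_inf] at hx
        obtain ⟨hxr, hxo⟩ := hx
        have ho := mem_span_orthogonal_iff.mp hxo
        obtain ⟨u, hu⟩ := hxr
        have hu' : absZ N M Z u = x := hu
        have hx2 : P2 N M x = x := by
          rw [← hu']; exact comp_apply_eq (P2_mul_absZ h1) u
        rw [Submodule.mem_inf]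
        constructor
        · rw [Vsub, mem_span_orthogonal_iff]
          intro s hs
          simp only [Set.mem_insert_iff, Set.mem_singleton_iff] at hs
          rcases hs with rfl | rfl | rfl | rfl | rfl | rfl
          · rw [← hx2, inner_P2_right, P2_ket0, inner_zero_left]
          · rw [← hx2, inner_P2_right, P2_ket1 hN, inner_zero_left]
          · exact ho _ (by simp)
          · rw [← hx2, inner_P2_right, P2_psi', inner_zero_left]
          · rw [← hx2, inner_P2_right, comp_apply_eq (P2_mul_Z h1),
              ContinuousLinearMap.zero_apply, inner_zero_left]
          · exact ho _ (by simp)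
        · rw [Submodule.mem_orthogonal]
          intro w hw
          rw [WD, Submodule.mem_inf, Submodule.mem_inf] at hw
          obtain ⟨⟨-, hwZ⟩, -⟩ := hw
          rw [LinearMap.mem_ker, ContinuousLinearMap.coe_coe] at hwZ
          have hx3 : adjoint Z (Z u) = x := hu
          rw [← hx3, ContinuousLinearMap.adjoint_inner_right, hwZ, inner_zero_left]
      · -- subB ≤ Vsub ⊓ WDᗮ
        intro y hy
        rw [subB, Submodule.mem_inf] at hy
        obtain ⟨hyr, hyo⟩ := hy
        have ho := mem_span_orthogonal_iff.mp hyo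
        obtain ⟨v, hv⟩ := hyr
        have hv' : P3 N M v = y := hv
        have hy3 : P3 N M y = y := by
          rw [← hv']; exact comp_apply_eq (P3_mul_P3) v
        rw [Submodule.mem_inf]
        constructor
        · rw [Vsub, mem_span_orthogonal_iff]
          intro s hs
          simp only [Set.mem_insert_iff, Set.mem_singleton_iff] at hs
          rcases hs with rfl | rfl | rfl | rfl | rfl | rfl
          · rw [← hy3, inner_P3_right, P3_ket0, inner_zero_left]
          · rw [← hy3, inner_P3_right, P3_ket1 hN, inner_zero_left]
          · rw [← hy3, inner_P3_right, P3_psi, inner_zero_left]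
          · exact ho _ (by simp)
          · exact ho _ (by simp)
          · rw [← hy3, inner_P3_right, comp_apply_eq (P3_mul_adjZ h1),
              ContinuousLinearMap.zero_apply, inner_zero_left]
        · rw [Submodule.mem_orthogonal]
          intro w hw
          rw [WD, Submodule.mem_inf, Submodule.mem_inf] at hw
          obtain ⟨⟨-, -⟩, hwZ'⟩ := hw
          rw [LinearMap.mem_ker, ContinuousLinearMap.coe_coe] at hwZ'
          have hy4 : Z (adjoint Z v) = y := by
            rw [← hv']; exact comp_apply_eq h2 v
          rw [← hy4, ← ContinuousLinearMap.adjoint_inner_left, hwZ', inner_zero_left]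
  · -- orthogonality of subA and subB
    intro x hx y hy
    rw [subA, Submodule.mem_inf] at hx
    rw [subB, Submodule.mem_inf] at hy
    obtain ⟨⟨u, hu⟩, -⟩ := hx
    obtain ⟨⟨v, hv⟩, -⟩ := hy
    have hu' : absZ N M Z u = x := hu
    have hv' : P3 N M v = y := hv
    have hx2 : P2 N M x = x := by
      rw [← hu']; exact comp_apply_eq (P2_mul_absZ h1) u
    have hy3 : P3 N M y = y := by
      rw [← hv']; exact comp_apply_eq (P3_mul_P3) v
    calc ⟪x, y⟫_ℂ = ⟪x, P3 N M y⟫_ℂ := by rw [hy3]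
      _ = ⟪P3 N M x, y⟫_ℂ := inner_P3_right x y
      _ = ⟪P3 N M (P2 N M x), y⟫_ℂ := by rw [hx2]
      _ = 0 := by
          rw [comp_apply_eq (P3_mul_P2), ContinuousLinearMap.zero_apply, inner_zero_left]

end AKV
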